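/- Let $\phi \in \mathrm{L}^1(\mathbb{R})$ with $\phi \geq 0$ and $\int_\mathbb{R} \phi(x)\,dx = 1$, and let $R, L > 0$. Then $\int_{-R}^R \int_{-R}^R a\, \phi(a(s-\hat{s}))\, e^{-i(s-\hat{s})\sigma}\, ds\, d\hat{s} \to 2R$ as $a \to \infty$, uniformly for $\sigma \in [-L, L]$. -/

import Mathlib

open MeasureTheory Filter Set intervalIntegral Complex Topology


lemma exp_aux (θ : ℝ) : ‖Complex.exp ((θ:ℂ) * Complex.I) - 1‖ ≤ |θ| := by
  have h1 : Complex.exp ((θ:ℂ) * Complex.I) - 1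
      = ⟨Real.cos θ - 1, Real.sin θ⟩ := by
    rw [Complex.exp_mul_I]
    apply Complex.ext <;> simp [Complex.cos_ofReal_re, Complex.sin_ofReal_re]
  have h2 : ‖Complex.exp ((θ:ℂ) * Complex.I) - 1‖ ^ 2 ≤ |θ| ^ 2 := by
    rw [h1, Complex.sq_norm, Complex.normSq_mk]
    have := Real.one_sub_sq_div_two_le_cos (x := θ)
    have hs := Real.sin_sq_le_sq (x := θ)
    nlinarith [_root_.sq_abs θ, Real.sin_sq_add_cos_sq θ]
  exact (pow_le_pow_iff_left₀ (norm_nonneg _) (abs_nonneg _) two_ne_zero).1 h2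

lemma exp_aux2 (u σ : ℝ) : ‖Complex.exp (-(Complex.I * u * σ)) - 1‖ ≤ |u| * |σ| := by
  have h : -(Complex.I * u * σ) = ((-(u*σ) : ℝ) : ℂ) * Complex.I := by push_cast; ring
  rw [h]
  calc ‖Complex.exp ((((-(u*σ)) : ℝ):ℂ) * Complex.I) - 1‖ ≤ |(-(u*σ))| := exp_aux _
    _ = |u| * |σ| := by rw [abs_neg, abs_mul]

lemma exp_norm_one (u σ : ℝ) : ‖Complex.exp (-(Complex.I * u * σ))‖ = 1 := by
  rw [Complex.norm_exp]
  norm_num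

lemma exp_aux3 (u σ : ℝ) : ‖Complex.exp (-(Complex.I * u * σ)) - 1‖ ≤ 2 := by
  calc ‖Complex.exp (-(Complex.I * u * σ)) - 1‖ ≤ ‖Complex.exp (-(Complex.I * u * σ))‖ + ‖(1:ℂ)‖ :=
        norm_sub_le _ _
    _ ≤ 2 := by rw [exp_norm_one]; norm_num

lemma inner_est (φ : ℝ → ℝ) (hint : Integrable φ) (hpos : ∀ x, 0 ≤ φ x) (hone : ∫ x, φ x = 1)
    {R L δ a σ t : ℝ} (hR : 0 < R) (hδ : 0 < δ) (ha : 0 < a) (hσ : |σ| ≤ L) (ht : |t| ≤ R) :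
    ‖(∫ s in (-R)..R, ((a * φ (a * (s - t)) : ℝ) : ℂ) * Complex.exp (-(Complex.I * (s - t) * σ))) - 1‖
      ≤ L * δ + 2 * (1 - ∫ v in (-(a*δ))..(a*δ), φ v)
        + (1 - ∫ v in (-(a*(R - |t|)))..(a*(R - |t|)), φ v) := by
  have hL0 : 0 ≤ L := le_trans (abs_nonneg σ) hσ
  set ψ : ℝ → ℝ := fun u => a * φ (a * u) with hψdef
  set e : ℝ → ℂ := fun u => Complex.exp (-(Complex.I * u * σ)) with hedef
  set f : ℝ → ℂ := fun u => ((ψ u : ℝ) : ℂ) * e u with hfdef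
  have hψint : Integrable ψ := (hint.comp_mul_left' ha.ne').const_mul a
  have hψ0 : ∀ u, 0 ≤ ψ u := fun u => mul_nonneg ha.le (hpos _)
  have hψ1 : ∫ u, ψ u = 1 := by
    have h1 : ∫ u, ψ u = a * ∫ u, φ (a * u) := MeasureTheory.integral_const_mul a _
    rw [h1, MeasureTheory.Measure.integral_comp_mul_left φ a, hone,
      smul_eq_mul, abs_inv, abs_of_pos ha]
    field_simp
  have hψcint : Integrable (fun u => ((ψ u : ℝ) : ℂ)) := by
    simpa [Complex.real_smul] using hψint.smul_const (1:ℂ)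
  have hψc1 : ∫ u, ((ψ u : ℝ) : ℂ) = 1 := by
    have h1 := _root_.integral_smul_const (μ := (volume : Measure ℝ)) ψ (1:ℂ)
    simp only [Complex.real_smul, mul_one, smul_eq_mul] at h1
    rw [h1, hψ1]
    norm_num
  have hscale : ∀ c : ℝ, (∫ u in (-c)..c, ψ u) = ∫ v in (-(a*c))..(a*c), φ v := by
    intro c
    have h1 : (∫ u in (-c)..c, ψ u) = a * ∫ u in (-c)..c, φ (a * u) :=
      intervalIntegral.integral_const_mul a _
    rw [h1, intervalIntegral.integral_comp_mul_left φ ha.ne',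
      smul_eq_mul, ← mul_assoc, mul_inv_cancel₀ ha.ne', one_mul, mul_neg]
  have hecont : Continuous e := by
    apply Complex.continuous_exp.comp
    fun_prop
  have hfint : Integrable f := by
    have := Integrable.bdd_mul hψcint hecont.aestronglyMeasurable
      (Eventually.of_forall fun u => (exp_norm_one u σ).le)
    exact this.congr (Eventually.of_forall fun u => mul_comm _ _)
  have hJle : -R - t ≤ R - t := by linarith
  set J : Set ℝ := Ioc (-R - t) (R - t) with hJdef
  have hJmeas : MeasurableSet J := measurableSet_Ioc
  have step1 : (∫ s in (-R)..R, ((a * φ (a * (s - t)) : ℝ) : ℂ)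
      * Complex.exp (-(Complex.I * (s - t) * σ))) = ∫ u in J, f u := by
    rw [intervalIntegral.integral_congr (g := fun s => f (s - t))
      (fun s _ => by simp only [hfdef, hψdef, hedef]; push_cast; ring)]
    rw [intervalIntegral.integral_comp_sub_right f t,
      intervalIntegral.integral_of_le (by linarith : -R - t ≤ R - t)]
  have hsplit : (∫ u in J, ((ψ u : ℝ) : ℂ)) + ∫ u in Jᶜ, ((ψ u : ℝ) : ℂ) = 1 := by
    rw [integral_add_compl hJmeas hψcint, hψc1]
  have step2 : (∫ u in J, f u) - 1
      = (∫ u in J, ((ψ u : ℝ) : ℂ) * (e u - 1)) - ∫ u in Jᶜ, ((ψ u : ℝ) : ℂ) := by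
    have h1 : ∫ u in J, ((ψ u : ℝ) : ℂ) * (e u - 1)
        = (∫ u in J, f u) - ∫ u in J, ((ψ u : ℝ) : ℂ) := by
      rw [← MeasureTheory.integral_sub hfint.integrableOn hψcint.integrableOn]
      congr 1
      funext u
      simp only [hfdef]
      ring
    rw [h1, ← hsplit]
    ring
  -- Term A
  set S : Set ℝ := {u : ℝ | δ < |u|} with hSdef
  have hSmeas : MeasurableSet S := (isOpen_lt continuous_const _root_.continuous_abs).measurableSet
  set g : ℝ → ℝ := fun u => L * δ * ψ u + 2 * S.indicator ψ u with hgdef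
  have hgint : Integrable g := (hψint.const_mul (L*δ)).add ((hψint.indicator hSmeas).const_mul 2)
  have hg0 : ∀ u, 0 ≤ g u := fun u => add_nonneg
    (mul_nonneg (mul_nonneg hL0 hδ.le) (hψ0 u))
    (mul_nonneg two_pos.le (Set.indicator_nonneg (fun x _ => hψ0 x) u))
  have hpt : ∀ u, ψ u * ‖e u - 1‖ ≤ g u := by
    intro u
    by_cases hu : |u| ≤ δ
    · have h1 : ‖e u - 1‖ ≤ L * δ := by
        calc ‖e u - 1‖ ≤ |u| * |σ| := exp_aux2 u σ
          _ ≤ δ * L := mul_le_mul hu hσ (abs_nonneg _) hδ.le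
          _ = L * δ := mul_comm _ _
      have h2 : ψ u * ‖e u - 1‖ ≤ L * δ * ψ u := by
        rw [mul_comm (L * δ) (ψ u)]
        exact mul_le_mul_of_nonneg_left h1 (hψ0 u)
      exact h2.trans (le_add_of_nonneg_right
        (mul_nonneg two_pos.le (Set.indicator_nonneg (fun x _ => hψ0 x) u)))
    · push_neg at hu
      have h2 : S.indicator ψ u = ψ u := Set.indicator_of_mem (by exact hu : u ∈ S) ψ
      calc ψ u * ‖e u - 1‖ ≤ ψ u * 2 := mul_le_mul_of_nonneg_left (exp_aux3 u σ) (hψ0 u)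
        _ ≤ g u := by
            simp only [hgdef, h2]
            nlinarith [mul_nonneg (mul_nonneg hL0 hδ.le) (hψ0 u)]
  have hprodint : Integrable (fun u => ((ψ u : ℝ) : ℂ) * (e u - 1)) := by
    have := Integrable.bdd_mul hψcint ((hecont.sub continuous_const).aestronglyMeasurable)
      (Eventually.of_forall fun u => exp_aux3 u σ)
    exact this.congr (Eventually.of_forall fun u => mul_comm _ _)
  have hpteq : ∀ u, ‖((ψ u : ℝ) : ℂ) * (e u - 1)‖ = ψ u * ‖e u - 1‖ := by
    intro u
    rw [norm_mul, Complex.norm_real, Real.norm_eq_abs, _root_.abs_of_nonneg (hψ0 u)]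
  have termA : ‖∫ u in J, ((ψ u : ℝ) : ℂ) * (e u - 1)‖
      ≤ L * δ + 2 * (1 - ∫ v in (-(a*δ))..(a*δ), φ v) := by
    have hA1 : ‖∫ u in J, ((ψ u : ℝ) : ℂ) * (e u - 1)‖
        ≤ ∫ u in J, ‖((ψ u : ℝ) : ℂ) * (e u - 1)‖ :=
      MeasureTheory.norm_integral_le_integral_norm _
    refine hA1.trans ?_
    have hA2 : (∫ u in J, ‖((ψ u : ℝ) : ℂ) * (e u - 1)‖) ≤ ∫ u in J, g u :=
      setIntegral_mono_on hprodint.norm.integrableOn hgint.integrableOn hJmeas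
        (fun u _ => (hpteq u) ▸ hpt u)
    refine hA2.trans ?_
    have hA3 : (∫ u in J, g u) ≤ ∫ u, g u :=
      setIntegral_le_integral hgint (Eventually.of_forall hg0)
    refine hA3.trans ?_
    have hA4 : ∫ u, g u = L * δ + 2 * ∫ u in S, ψ u := by
      rw [hgdef, MeasureTheory.integral_add (hψint.const_mul (L*δ))
        ((hψint.indicator hSmeas).const_mul 2)]
      have e1 : ∫ u, L * δ * ψ u = L * δ * ∫ u, ψ u := MeasureTheory.integral_const_mul _ ψ
      have e2 : ∫ u, 2 * S.indicator ψ u = 2 * ∫ u, S.indicator ψ u :=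
        MeasureTheory.integral_const_mul _ _
      rw [e1, e2, hψ1, mul_one, MeasureTheory.integral_indicator hSmeas]
    rw [hA4]
    have hsub : S ⊆ (Ioc (-δ) δ)ᶜ := by
      intro u hu hu2
      simp only [hSdef, mem_setOf_eq] at hu
      rcases hu2 with ⟨h1, h2⟩
      exact absurd (abs_le.2 ⟨h1.le, h2⟩) (not_le.2 hu)
    have h1 : (∫ u in S, ψ u) ≤ ∫ u in (Ioc (-δ) δ)ᶜ, ψ u :=
      setIntegral_mono_set hψint.integrableOn (Eventually.of_forall hψ0)
        (HasSubset.Subset.eventuallyLE hsub)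
    have h2 := integral_add_compl (measurableSet_Ioc (a := -δ) (b := δ)) hψint
    rw [hψ1] at h2
    have h3 : (∫ u in Ioc (-δ) δ, ψ u) = ∫ v in (-(a*δ))..(a*δ), φ v := by
      rw [← intervalIntegral.integral_of_le (by linarith : -δ ≤ δ), hscale δ]
    linarith
  have termB : ‖∫ u in Jᶜ, ((ψ u : ℝ) : ℂ)‖
      ≤ 1 - ∫ v in (-(a*(R - |t|)))..(a*(R - |t|)), φ v := by
    set c : ℝ := R - |t| with hcdef
    have hc0 : 0 ≤ c := by simp only [hcdef]; linarith
    have hB1 : ‖∫ u in Jᶜ, ((ψ u : ℝ) : ℂ)‖ ≤ ∫ u in Jᶜ, ψ u := by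
      refine (MeasureTheory.norm_integral_le_integral_norm _).trans ?_
      refine le_of_eq ?_
      refine MeasureTheory.integral_congr_ae (Eventually.of_forall fun u => ?_)
      simp only [Complex.norm_real, Real.norm_eq_abs]
      exact _root_.abs_of_nonneg (hψ0 u)
    refine hB1.trans ?_
    have h2 := integral_add_compl hJmeas hψint
    rw [hψ1] at h2
    have hsub : Ioc (-c) c ⊆ J := by
      intro u hu
      rcases hu with ⟨h1, h3⟩
      constructor
      · have hh : -R - t ≤ -c := by
          simp only [hcdef, neg_sub]
          have := neg_abs_le t
          linarith
        linarith
      · have hh : c ≤ R - t := by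
          simp only [hcdef]
          have := le_abs_self t
          linarith
        linarith
    have h4 : (∫ v in (-(a*c))..(a*c), φ v) ≤ ∫ u in J, ψ u := by
      rw [← hscale c, intervalIntegral.integral_of_le (by linarith : -c ≤ c)]
      exact setIntegral_mono_set hψint.integrableOn (Eventually.of_forall hψ0)
        (HasSubset.Subset.eventuallyLE hsub)
    linarith
  rw [step1, step2]
  calc ‖(∫ u in J, ((ψ u : ℝ) : ℂ) * (e u - 1)) - ∫ u in Jᶜ, ((ψ u : ℝ) : ℂ)‖
      ≤ ‖∫ u in J, ((ψ u : ℝ) : ℂ) * (e u - 1)‖ + ‖∫ u in Jᶜ, ((ψ u : ℝ) : ℂ)‖ := norm_sub_le _ _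
    _ ≤ _ := add_le_add termA termB

theorem stmt9 (φ : ℝ → ℝ) (hint : MeasureTheory.Integrable φ) (hpos : ∀ x, 0 ≤ φ x)
    (hone : ∫ x, φ x = 1) (R L : ℝ) (hR : 0 < R) (hL : 0 < L) :
    TendstoUniformlyOn
      (fun (a : ℝ) (σ : ℝ) =>
        ∫ t in (-R)..R, ∫ s in (-R)..R,
          ((a * φ (a * (s - t)) : ℝ) : ℂ) * Complex.exp (-(Complex.I * (s - t) * σ)))
      (fun _ => ((2 * R : ℝ) : ℂ)) Filter.atTop (Set.Icc (-L) L) := by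
  rw [Metric.tendstoUniformlyOn_iff]
  intro ε hε
  set δ : ℝ := ε / (4 * R * L + 1) with hδdef
  have hδ : 0 < δ := div_pos hε (by positivity)
  set K : ℝ → ℝ := fun M => ∫ v in (-M)..M, φ v with hKdef
  have hKcont : Continuous K := by
    have h1 : Continuous fun M : ℝ => ∫ v in (0:ℝ)..M, φ v := hint.continuous_primitive 0
    have h2 : ∀ M : ℝ, K M = (∫ v in (0:ℝ)..M, φ v) - ∫ v in (0:ℝ)..(-M), φ v := by
      intro M
      have h3 := intervalIntegral.integral_add_adjacent_intervals (a := 0) (b := -M) (c := M)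
        (μ := volume) hint.intervalIntegrable hint.intervalIntegrable
      simp only [hKdef]
      linarith
    rw [show K = fun M => (∫ v in (0:ℝ)..M, φ v) - ∫ v in (0:ℝ)..(-M), φ v from funext h2]
    exact h1.sub (h1.comp continuous_neg)
  have hK_le_one : ∀ M, K M ≤ 1 := by
    intro M
    rcases le_or_gt 0 M with hM | hM
    · have h1 : K M = ∫ v in Ioc (-M) M, φ v := intervalIntegral.integral_of_le (by linarith)
      rw [h1, ← hone]
      exact setIntegral_le_integral hint (Eventually.of_forall hpos)
    · have h1 : K M = -∫ v in M..(-M), φ v := intervalIntegral.integral_symm M (-M)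
      have h2 : 0 ≤ ∫ v in M..(-M), φ v :=
        intervalIntegral.integral_nonneg (by linarith) (fun u _ => hpos u)
      linarith
  have hKtends : Tendsto K atTop (𝓝 1) := by
    have h := MeasureTheory.intervalIntegral_tendsto_integral hint
      tendsto_neg_atTop_atBot tendsto_id
    rw [hone] at h
    exact h
  set D : ℝ → ℝ := fun a => ∫ t in Ioc (-R) R, (1 - K (a * (R - |t|))) with hDdef
  have hD : Tendsto D atTop (𝓝 0) := by
    have h0 : (0:ℝ) = ∫ _ in Ioc (-R) R, (0:ℝ) := by simp
    rw [h0]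
    apply MeasureTheory.tendsto_integral_filter_of_dominated_convergence
      (bound := fun _ => (1:ℝ))
    · filter_upwards with a
      exact ((continuous_const.sub (hKcont.comp (continuous_const.mul
        (continuous_const.sub _root_.continuous_abs)))).aestronglyMeasurable).restrict
    · filter_upwards [eventually_ge_atTop (0:ℝ)] with a ha0
      filter_upwards [ae_restrict_mem measurableSet_Ioc] with t ht
      have ht' : |t| ≤ R := abs_le.2 ⟨ht.1.le, ht.2⟩
      have harg : 0 ≤ a * (R - |t|) := mul_nonneg ha0 (by linarith)
      have hk0 : 0 ≤ K (a * (R - |t|)) :=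
        intervalIntegral.integral_nonneg (by linarith) (fun u _ => hpos u)
      have hk1 := hK_le_one (a * (R - |t|))
      rw [Real.norm_eq_abs]
      rw [abs_le]
      constructor <;> linarith
    · exact (integrableOn_const measure_Ioc_lt_top.ne)
    · have hae : ∀ᵐ t ∂(volume.restrict (Ioc (-R) R)), t ≠ R := by
        refine ae_restrict_of_ae ?_
        rw [MeasureTheory.ae_iff]
        simp only [not_not, setOf_eq_eq_singleton]
        exact Real.volume_singleton
      filter_upwards [ae_restrict_mem measurableSet_Ioc, hae] with t ht htne
      have ht' : |t| < R := abs_lt.2 ⟨ht.1, lt_of_le_of_ne ht.2 htne⟩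
      have harg : Tendsto (fun a : ℝ => a * (R - |t|)) atTop atTop :=
        Tendsto.atTop_mul_const (by linarith) tendsto_id
      have h1 := hKtends.comp harg
      have h2 : Tendsto (fun a : ℝ => 1 - K (a * (R - |t|))) atTop (𝓝 (1 - 1)) :=
        tendsto_const_nhds.sub h1
      simpa using h2
  have hKδ : Tendsto (fun a : ℝ => K (a * δ)) atTop (𝓝 1) :=
    hKtends.comp (Tendsto.atTop_mul_const hδ tendsto_id)
  set bound : ℝ → ℝ := fun a => 2*R*(L*δ + 2*(1 - K (a*δ))) + D a with hbounddef
  have hboundlim : Tendsto bound atTop (𝓝 (2*R*(L*δ))) := by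
    have h1 : Tendsto (fun a : ℝ => 2*R*(L*δ + 2*(1 - K (a*δ)))) atTop
        (𝓝 (2*R*(L*δ + 2*(1 - 1)))) :=
      (((tendsto_const_nhds.sub hKδ).const_mul 2).const_add (L*δ)).const_mul (2*R)
    have h2 := h1.add hD
    have h3 : 2*R*(L*δ + 2*(1 - 1)) + 0 = 2*R*(L*δ) := by ring
    rwa [h3] at h2
  have hlt : 2*R*(L*δ) < ε := by
    have h41 : (0:ℝ) < 4*R*L+1 := by positivity
    have h1 : 2*R*(L*δ) = (2*R*L)*ε/(4*R*L+1) := by rw [hδdef]; ring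
    rw [h1, div_lt_iff₀ h41]
    nlinarith [mul_pos (mul_pos hR hL) hε]
  filter_upwards [hboundlim.eventually_lt_const hlt, eventually_gt_atTop (0:ℝ)] with a hblt ha0
  intro σ hσ
  have hσ' : |σ| ≤ L := abs_le.2 ⟨hσ.1, hσ.2⟩
  rw [dist_comm, dist_eq_norm]
  -- inner integral as a function of t
  set I : ℝ → ℂ := fun t => ∫ s in (-R)..R,
    ((a * φ (a * (s - t)) : ℝ) : ℂ) * Complex.exp (-(Complex.I * (s - t) * σ)) with hIdef
  set f : ℝ → ℂ := fun u =>
    ((a * φ (a * u) : ℝ) : ℂ) * Complex.exp (-(Complex.I * u * σ)) with hfdef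
  have hψint : Integrable (fun u => a * φ (a * u)) := (hint.comp_mul_left' ha0.ne').const_mul a
  have hψcint : Integrable (fun u => ((a * φ (a * u) : ℝ) : ℂ)) := by
    simpa [Complex.real_smul] using hψint.smul_const (1:ℂ)
  have hecont : Continuous (fun u : ℝ => Complex.exp (-(Complex.I * u * σ))) := by
    apply Complex.continuous_exp.comp
    fun_prop
  have hfint : Integrable f := by
    have := Integrable.bdd_mul hψcint hecont.aestronglyMeasurable
      (Eventually.of_forall fun u => (exp_norm_one u σ).le)
    exact this.congr (Eventually.of_forall fun u => mul_comm _ _)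
  have hIeq : ∀ t, I t = (∫ u in (0:ℝ)..(R - t), f u) - ∫ u in (0:ℝ)..(-R - t), f u := by
    intro t
    have e1 : I t = ∫ s in (-R)..R, f (s - t) := by
      refine intervalIntegral.integral_congr fun s _ => ?_
      simp only [hfdef]
      push_cast
      ring_nf
    rw [e1, intervalIntegral.integral_comp_sub_right f t]
    have h3 := intervalIntegral.integral_add_adjacent_intervals (a := 0) (b := -R - t)
      (c := R - t) (μ := volume) hfint.intervalIntegrable hfint.intervalIntegrable
    have := sub_eq_of_eq_add' h3.symm
    linear_combination -this
  have hIcont : Continuous I := by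
    rw [show I = fun t => (∫ u in (0:ℝ)..(R - t), f u) - ∫ u in (0:ℝ)..(-R - t), f u
      from funext hIeq]
    have hprim : Continuous fun x : ℝ => ∫ u in (0:ℝ)..x, f u := hfint.continuous_primitive 0
    exact (hprim.comp (continuous_const.sub continuous_id)).sub
      (hprim.comp (continuous_const.sub continuous_id))
  have hGsub : (∫ t in (-R)..R, I t) - ((2 * R : ℝ) : ℂ) = ∫ t in (-R)..R, (I t - 1) := by
    rw [intervalIntegral.integral_sub (hIcont.intervalIntegrable _ _) (_root_.intervalIntegrable_const)]
    congr 1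
    rw [intervalIntegral.integral_const]
    rw [Complex.real_smul, mul_one]
    push_cast
    ring
  set g : ℝ → ℝ := fun t => L * δ + 2 * (1 - K (a*δ)) + (1 - K (a * (R - |t|))) with hgdef
  have hgcont : Continuous g :=
    continuous_const.add (continuous_const.sub (hKcont.comp
      (continuous_const.mul (continuous_const.sub _root_.continuous_abs))))
  have hgnonneg : ∀ t, 0 ≤ g t := by
    intro t
    have h1 := hK_le_one (a*δ)
    have h2 := hK_le_one (a * (R - |t|))
    have : (0:ℝ) ≤ L * δ := mul_nonneg hL.le hδ.le
    simp only [hgdef]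
    linarith
  have hnorm : ‖∫ t in (-R)..R, (I t - 1)‖ ≤ |∫ t in (-R)..R, g t| := by
    apply intervalIntegral.norm_integral_le_abs_of_norm_le
    · rw [Set.uIoc_of_le (by linarith : -R ≤ R)]
      filter_upwards [ae_restrict_mem measurableSet_Ioc] with t ht
      have ht' : |t| ≤ R := abs_le.2 ⟨ht.1.le, ht.2⟩
      exact inner_est φ hint hpos hone hR hδ ha0 hσ' ht'
    · exact hgcont.intervalIntegrable _ _
  have hcont2 : Continuous fun t : ℝ => 1 - K (a * (R - |t|)) :=
    continuous_const.sub (hKcont.comp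
      (continuous_const.mul (continuous_const.sub _root_.continuous_abs)))
  have hgeval : (∫ t in (-R)..R, g t) = bound a := by
    simp only [hgdef, hbounddef]
    rw [intervalIntegral.integral_add
      (_root_.intervalIntegrable_const (c := L * δ + 2 * (1 - K (a*δ))))
      (hcont2.intervalIntegrable _ _)]
    rw [intervalIntegral.integral_const, smul_eq_mul,
      intervalIntegral.integral_of_le (by linarith : -R ≤ R)]
    simp only [hDdef]
    ring
  have hgabs : |∫ t in (-R)..R, g t| = bound a := by
    rw [_root_.abs_of_nonneg, hgeval]
    exact intervalIntegral.integral_nonneg (by linarith) (fun t _ => hgnonneg t)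
  calc ‖(∫ t in (-R)..R, I t) - ((2 * R : ℝ) : ℂ)‖
      = ‖∫ t in (-R)..R, (I t - 1)‖ := by rw [hGsub]
    _ ≤ |∫ t in (-R)..R, g t| := hnorm
    _ = bound a := hgabs
    _ < ε := hblt
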